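/- Let P_k(v) = v^k (1-v)^{k-1}, Q(v) = v(1-v), R(v) = 1 - 3v. Then for every l ≥ 0 and k ≥ 1, (k - l + 2) P_{k+1}^{(l)}(v) = (k+2) P_k^{(l)}(v) Q(v) + l P_k^{(l-1)}(v) R(v) + (k-1)(l-1)l P_k^{(l-2)}(v), where terms with negative derivative order are omitted (they carry vanishing coefficients). -/

import Mathlib

noncomputable def P (k : ℕ) : ℝ → ℝ := fun v => v ^ k * (1 - v) ^ (k - 1)

noncomputable def Q : ℝ → ℝ := fun v => v * (1 - v)

noncomputable def R : ℝ → ℝ := fun v => 1 - 3 * v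

lemma P_contDiff (k : ℕ) : ContDiff ℝ ⊤ (P k) := by
  unfold P; fun_prop

lemma P_diff (k n : ℕ) : Differentiable ℝ (iteratedDeriv n (P k)) :=
  (P_contDiff k).differentiable_iteratedDeriv n (by simp)

lemma hasDerivD (k n : ℕ) (v : ℝ) :
    HasDerivAt (iteratedDeriv n (P k)) (iteratedDeriv (n + 1) (P k) v) v := by
  have h := ((P_diff k n) v).hasDerivAt
  rwa [iteratedDeriv_succ]

lemma derivP (k : ℕ) (hk : 1 ≤ k) (v : ℝ) :
    HasDerivAt (P (k + 1)) (P k v * (((k : ℝ) + 1) - (2 * k + 1) * v)) v := by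
  obtain ⟨m, rfl⟩ : ∃ m, k = m + 1 := ⟨k - 1, (Nat.succ_pred_eq_of_pos hk).symm⟩
  have h1 : HasDerivAt (fun v : ℝ => v ^ (m + 2)) (((m : ℝ) + 2) * v ^ (m + 1)) v := by
    simpa using hasDerivAt_pow (m + 2) v
  have h2 : HasDerivAt (fun v : ℝ => (1 - v) ^ (m + 1)) (-(((m : ℝ) + 1) * (1 - v) ^ m)) v := by
    have hb : HasDerivAt (fun v : ℝ => 1 - v) (-1) v := by
      simpa using (hasDerivAt_const v (1:ℝ)).fun_sub (hasDerivAt_id v)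
    simpa [mul_comm] using hb.fun_pow (m + 1)
  have h := h1.fun_mul h2
  have hP : P (m + 1 + 1) = fun v : ℝ => v ^ (m + 2) * (1 - v) ^ (m + 1) := by
    funext w; simp [P]
  rw [hP]
  convert (show HasDerivAt (fun v : ℝ => v ^ (m + 2) * (1 - v) ^ (m + 1)) _ v from h) using 1
  show P (m + 1) v * _ = _
  simp only [P]
  push_cast
  ring

lemma lemB (k : ℕ) (hk : 1 ≤ k) (l : ℕ) (v : ℝ) :
    iteratedDeriv (l + 1) (P (k + 1)) v =
      iteratedDeriv l (P k) v * (((k : ℝ) + 1) - (2 * k + 1) * v)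
        - (l : ℝ) * (2 * k + 1) * iteratedDeriv (l - 1) (P k) v := by
  induction l generalizing v with
  | zero =>
      rw [iteratedDeriv_succ, iteratedDeriv_zero, (derivP k hk v).deriv]
      simp
  | succ n ih =>
      have hfun : iteratedDeriv (n + 1) (P (k + 1)) =
          fun w => iteratedDeriv n (P k) w * (((k : ℝ) + 1) - (2 * k + 1) * w)
            - (n : ℝ) * (2 * k + 1) * iteratedDeriv (n - 1) (P k) w := funext fun w => ih w
      have hL : HasDerivAt (fun w : ℝ => ((k : ℝ) + 1) - (2 * k + 1) * w) (-(2 * k + 1)) v := by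
        simpa using (hasDerivAt_const v ((k : ℝ) + 1)).fun_sub ((hasDerivAt_id v).const_mul (2 * (k:ℝ) + 1))
      have hH : HasDerivAt
          (fun w => iteratedDeriv n (P k) w * (((k : ℝ) + 1) - (2 * k + 1) * w)
            - (n : ℝ) * (2 * k + 1) * iteratedDeriv (n - 1) (P k) w)
          (iteratedDeriv (n + 1) (P k) v * (((k : ℝ) + 1) - (2 * k + 1) * v)
            + iteratedDeriv n (P k) v * (-(2 * k + 1))
            - (n : ℝ) * (2 * k + 1) * iteratedDeriv (n - 1 + 1) (P k) v) v :=
        ((hasDerivD k n v).mul hL).sub ((hasDerivD k (n - 1) v).const_mul _)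
      have hgoal : iteratedDeriv (n + 1 + 1) (P (k + 1)) v
          = iteratedDeriv (n + 1) (P k) v * (((k : ℝ) + 1) - (2 * k + 1) * v)
            + iteratedDeriv n (P k) v * (-(2 * k + 1))
            - (n : ℝ) * (2 * k + 1) * iteratedDeriv (n - 1 + 1) (P k) v := by
        rw [iteratedDeriv_succ, hfun, hH.deriv]
      have hc : (n : ℝ) * (2 * k + 1) * iteratedDeriv (n - 1 + 1) (P k) v
          = (n : ℝ) * (2 * k + 1) * iteratedDeriv n (P k) v := by
        cases n with
        | zero => simp
        | succ m => rfl
      rw [hgoal, hc]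
      simp only [Nat.add_sub_cancel]
      push_cast
      ring

theorem stmt_14 (k l : ℕ) (hk : 1 ≤ k) (v : ℝ) :
    ((k : ℝ) - l + 2) * iteratedDeriv l (P (k + 1)) v =
      ((k : ℝ) + 2) * iteratedDeriv l (P k) v * Q v
        + (l : ℝ) * iteratedDeriv (l - 1) (P k) v * R v
        + ((k : ℝ) - 1) * ((l : ℝ) - 1) * (l : ℝ) * iteratedDeriv (l - 2) (P k) v := by
  induction l generalizing v with
  | zero =>
      obtain ⟨m, rfl⟩ : ∃ m, k = m + 1 := ⟨k - 1, (Nat.succ_pred_eq_of_pos hk).symm⟩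
      simp only [Nat.cast_zero, iteratedDeriv_zero, Nat.zero_sub, zero_mul, mul_zero]
      simp only [P, Q]
      push_cast
      ring
  | succ l ih =>
      have hfun : (fun w => ((k : ℝ) - l + 2) * iteratedDeriv l (P (k + 1)) w) =
          fun w => ((k : ℝ) + 2) * iteratedDeriv l (P k) w * Q w
            + (l : ℝ) * iteratedDeriv (l - 1) (P k) w * R w
            + ((k : ℝ) - 1) * ((l : ℝ) - 1) * (l : ℝ) * iteratedDeriv (l - 2) (P k) w :=
        funext fun w => ih w
      have hQ : HasDerivAt Q (1 - 2 * v) v := by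
        have := (hasDerivAt_id v).fun_mul ((hasDerivAt_const v (1:ℝ)).fun_sub (hasDerivAt_id v))
        convert (show HasDerivAt Q _ v from this) using 1
        simp only [id_eq]; ring
      have hR : HasDerivAt R (-3) v := by
        have := (hasDerivAt_const v (1:ℝ)).fun_sub ((hasDerivAt_id v).const_mul 3)
        convert (show HasDerivAt R _ v from this) using 1
        ring
      have hG : HasDerivAt (fun w => ((k : ℝ) - l + 2) * iteratedDeriv l (P (k + 1)) w)
          (((k : ℝ) - l + 2) * iteratedDeriv (l + 1) (P (k + 1)) v) v :=
        (hasDerivD (k + 1) l v).const_mul _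
      have hH : HasDerivAt
          (fun w => ((k : ℝ) + 2) * iteratedDeriv l (P k) w * Q w
            + (l : ℝ) * iteratedDeriv (l - 1) (P k) w * R w
            + ((k : ℝ) - 1) * ((l : ℝ) - 1) * (l : ℝ) * iteratedDeriv (l - 2) (P k) w)
          ((((k : ℝ) + 2) * iteratedDeriv (l + 1) (P k) v) * Q v
              + (((k : ℝ) + 2) * iteratedDeriv l (P k) v) * (1 - 2 * v)
            + (((l : ℝ) * iteratedDeriv (l - 1 + 1) (P k) v) * R v
              + ((l : ℝ) * iteratedDeriv (l - 1) (P k) v) * (-3))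
            + ((k : ℝ) - 1) * ((l : ℝ) - 1) * (l : ℝ) * iteratedDeriv (l - 2 + 1) (P k) v) v := by
        exact ((((hasDerivD k l v).const_mul _).mul hQ).add
          (((hasDerivD k (l - 1) v).const_mul _).mul hR)).add
          ((hasDerivD k (l - 2) v).const_mul _)
      have hI : ((k : ℝ) - l + 2) * iteratedDeriv (l + 1) (P (k + 1)) v
          = (((k : ℝ) + 2) * iteratedDeriv (l + 1) (P k) v) * Q v
              + (((k : ℝ) + 2) * iteratedDeriv l (P k) v) * (1 - 2 * v)
            + (((l : ℝ) * iteratedDeriv (l - 1 + 1) (P k) v) * R v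
              + ((l : ℝ) * iteratedDeriv (l - 1) (P k) v) * (-3))
            + ((k : ℝ) - 1) * ((l : ℝ) - 1) * (l : ℝ) * iteratedDeriv (l - 2 + 1) (P k) v := by
        rw [← hG.deriv, hfun, hH.deriv]
      have hc1 : (l : ℝ) * iteratedDeriv (l - 1 + 1) (P k) v
          = (l : ℝ) * iteratedDeriv l (P k) v := by
        cases l with
        | zero => simp
        | succ m => rfl
      have hc2 : ((l : ℝ) - 1) * (l : ℝ) * iteratedDeriv (l - 2 + 1) (P k) v
          = ((l : ℝ) - 1) * (l : ℝ) * iteratedDeriv (l - 1) (P k) v := by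
        match l with
        | 0 => simp
        | 1 => norm_num
        | (m + 2) => rfl
      have hB := lemB k hk l v
      simp only [Nat.add_sub_cancel, Nat.succ_sub_succ, Nat.succ_sub_one, Nat.sub_zero]
      simp only [Q, R] at *
      push_cast
      linear_combination hI - hB + (1 - 3 * v) * hc1 + ((k : ℝ) - 1) * hc2
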